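/- For every integer n ≥ 1, f(2^{2n} + 2^{2n+3}ℤ₂) = 2^{2n−2} + 2^{2n+1}ℤ₂ as sets. -/
import Mathlib


open Function Set

/-- The cubic polynomial `f(x) = (9/4)·x·(x−1)²` acting on `ℚ₂`. -/
noncomputable def f : ℚ_[2] → ℚ_[2] := fun x => (9 / 4 : ℚ_[2]) * x * (x - 1) ^ 2

lemma n2 : ‖(2:ℚ_[2])‖ = 1/2 := by
  have := Padic.norm_p (p := 2); norm_num at this ⊢; exact this

lemma n8 : ‖(8:ℚ_[2])‖ = 1/8 := by
  have : (8:ℚ_[2]) = 2^3 := by norm_num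
  rw [this, norm_pow, n2]; norm_num

lemma n9 : ‖(9:ℚ_[2])‖ = 1 := by
  have h : (9:ℚ_[2]) = 1 + 8 := by norm_num
  rw [h, Padic.add_eq_max_of_ne] <;> rw [n8] <;> norm_num

lemma n4 : ‖(4:ℚ_[2])‖ = 1/4 := by
  have : (4:ℚ_[2]) = 2^2 := by norm_num
  rw [this, norm_pow, n2]; norm_num

lemma n18 : ‖(18:ℚ_[2])‖ = 1/2 := by
  have : (18:ℚ_[2]) = 2 * 9 := by norm_num
  rw [this, norm_mul, n2, n9]; norm_num

lemma n49 : ‖(4/9:ℚ_[2])‖ = 1/4 := by rw [norm_div, n4, n9]; norm_num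

lemma n14 : ‖(1/4:ℚ_[2])‖ = 4 := by
  rw [norm_div, norm_one, n4]; norm_num

lemma nadd {a b : ℚ_[2]} {r : ℝ} (ha : ‖a‖ ≤ r) (hb : ‖b‖ ≤ r) : ‖a + b‖ ≤ r :=
  le_trans (Padic.nonarchimedean _ _) (max_le ha hb)

lemma half_pow_le {a b : ℕ} (h : a ≤ b) : (1/2:ℝ)^b ≤ (1/2:ℝ)^a :=
  pow_le_pow_of_le_one (by norm_num) (by norm_num) h

lemma normx {n : ℕ} {x : ℚ_[2]}
    (hx : ‖x - 2 ^ (2*n)‖ ≤ (1/2:ℝ) ^ (2*n+3)) : ‖x‖ ≤ (1/2:ℝ)^(2*n) := by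
  have h1 : x = (x - 2^(2*n)) + 2^(2*n) := by ring
  rw [h1]
  refine nadd (le_trans hx (half_pow_le (by omega))) ?_
  rw [norm_pow, n2]

lemma normx' {n : ℕ} {x : ℚ_[2]} (hn : 1 ≤ n)
    (hx : ‖x - 2 ^ (2*n)‖ ≤ (1/2:ℝ) ^ (2*n+3)) : ‖x‖ ≤ (1/4:ℝ) := by
  refine le_trans (normx hx) (le_trans (half_pow_le (show 2 ≤ 2*n by omega)) ?_)
  norm_num

lemma fwd {n : ℕ} (hn : 1 ≤ n) {x : ℚ_[2]}
    (hx : ‖x - 2 ^ (2*n)‖ ≤ (1/2:ℝ) ^ (2*n+3)) :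
    ‖f x - 2 ^ (2*n-2)‖ ≤ (1/2:ℝ) ^ (2*n+1) := by
  have hxn := normx hx
  have hx4 := normx' hn hx
  have hpow : (2:ℚ_[2]) ^ (2*n) = 4 * 2 ^ (2*n-2) := by
    have h : 2*n = 2 + (2*n-2) := by omega
    rw [h, pow_add]; norm_num
  have key : f x - 2 ^ (2*n-2)
      = (1/4) * (x - 2^(2*n)) + (x/4) * (9*x^2 + (-(18*x)) + 8) := by
    rw [hpow]; simp only [f]; ring
  rw [key]
  refine nadd ?_ ?_
  · rw [norm_mul, n14]
    calc (4:ℝ) * ‖x - 2^(2*n)‖ ≤ 4 * (1/2:ℝ)^(2*n+3) := by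
          nlinarith [hx]
      _ = (1/2:ℝ)^(2*n+1) := by
          rw [show 2*n+3 = (2*n+1)+2 by omega, pow_add]; ring
  · have hb : ‖9*x^2 + (-(18*x)) + 8‖ ≤ (1/8:ℝ) := by
      refine nadd (nadd ?_ ?_) (by rw [n8])
      · rw [norm_mul, n9, norm_pow, one_mul]
        nlinarith [norm_nonneg x]
      · rw [norm_neg, norm_mul, n18]
        nlinarith [norm_nonneg x]
    have hxd : ‖x/4‖ = 4 * ‖x‖ := by rw [norm_div, n4]; ring
    rw [norm_mul, hxd]
    calc 4 * ‖x‖ * ‖9*x^2 + (-(18*x)) + 8‖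
        ≤ 4 * (1/2:ℝ)^(2*n) * (1/8) := by
          have h0 : (0:ℝ) ≤ ‖x‖ := norm_nonneg x
          have h1 : (0:ℝ) ≤ ‖9*x^2 + (-(18*x)) + 8‖ := norm_nonneg _
          nlinarith
      _ = (1/2:ℝ)^(2*n+1) := by rw [pow_succ]; ring

/-- For every `n ≥ 1`, `f(2^{2n} + 2^{2n+3}ℤ₂) = 2^{2n−2} + 2^{2n+1}ℤ₂` as sets. -/
theorem stmt6 (n : ℕ) (hn : 1 ≤ n) :
    f '' {x : ℚ_[2] | ‖x - 2 ^ (2 * n)‖ ≤ (1 / 2 : ℝ) ^ (2 * n + 3)} =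
      {x : ℚ_[2] | ‖x - 2 ^ (2 * n - 2)‖ ≤ (1 / 2 : ℝ) ^ (2 * n + 1)} := by
  apply Set.Subset.antisymm
  · rintro _ ⟨x, hx, rfl⟩
    exact fwd hn hx
  · rintro y hy
    simp only [Set.mem_setOf_eq] at hy
    set S : Set ℚ_[2] := {x : ℚ_[2] | ‖x - 2 ^ (2 * n)‖ ≤ (1 / 2 : ℝ) ^ (2 * n + 3)} with hS
    have hSclosed : IsClosed S := by
      have h : S = Metric.closedBall (2^(2*n)) ((1/2)^(2*n+3)) := by
        ext x; simp [hS, Metric.mem_closedBall, dist_eq_norm]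
      rw [h]; exact Metric.isClosed_closedBall
    have hne : S.Nonempty := ⟨2^(2*n), by simp only [hS, Set.mem_setOf_eq, sub_self, norm_zero]; positivity⟩
    haveI : Nonempty S := hne.to_subtype
    haveI : CompleteSpace S := hSclosed.isComplete.completeSpace_coe
    have hTmem : ∀ x ∈ S, (x - (4/9) * (f x - y)) ∈ S := by
      intro x hx
      simp only [hS, Set.mem_setOf_eq] at hx ⊢
      have h1 : x - (4/9) * (f x - y) - 2^(2*n)
          = (x - 2^(2*n)) + (-( (4/9) * (f x - y))) := by ring
      rw [h1]
      refine nadd hx ?_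
      rw [norm_neg, norm_mul, n49]
      have h2 : f x - y = (f x - 2^(2*n-2)) + (2^(2*n-2) - y) := by ring
      have h3 : ‖f x - y‖ ≤ (1/2:ℝ)^(2*n+1) := by
        rw [h2]
        refine nadd (fwd hn hx) ?_
        rw [norm_sub_rev]; exact hy
      calc (1/4:ℝ) * ‖f x - y‖ ≤ (1/4) * (1/2:ℝ)^(2*n+1) := by nlinarith
        _ = (1/2:ℝ)^(2*n+3) := by
            rw [show 2*n+3 = (2*n+1)+2 by omega, pow_add]; ring
    let T : S → S := fun x => ⟨x - (4/9) * (f x - y), hTmem x x.2⟩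
    have hcontract : ContractingWith (1/8 : NNReal) T := by
      constructor
      · rw [show ((1:NNReal)/8) = (8:NNReal)⁻¹ by norm_num]
        rw [NNReal.inv_lt_one_iff] <;> norm_num
      · refine LipschitzWith.of_dist_le_mul ?_
        rintro ⟨a, ha⟩ ⟨b, hb⟩
        have han := normx' hn ha
        have hbn := normx' hn hb
        simp only [T, Subtype.dist_eq, dist_eq_norm]
        have hid : (a - (4/9) * (f a - y)) - (b - (4/9) * (f b - y))
            = (a - b) * (2*a + 2*b + (-(a^2)) + (-(a*b)) + (-(b^2))) := by
          simp only [f]; ring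
        rw [hid, norm_mul]
        have hfac : ‖2*a + 2*b + (-(a^2)) + (-(a*b)) + (-(b^2))‖ ≤ (1/8:ℝ) := by
          have c1 : ‖2*a‖ ≤ (1/8:ℝ) := by
            rw [norm_mul, n2]; nlinarith [norm_nonneg a]
          have c2 : ‖2*b‖ ≤ (1/8:ℝ) := by
            rw [norm_mul, n2]; nlinarith [norm_nonneg b]
          have c3 : ‖-(a^2)‖ ≤ (1/8:ℝ) := by
            rw [norm_neg, norm_pow]; nlinarith [norm_nonneg a]
          have c4 : ‖-(a*b)‖ ≤ (1/8:ℝ) := by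
            rw [norm_neg, norm_mul]; nlinarith [norm_nonneg a, norm_nonneg b]
          have c5 : ‖-(b^2)‖ ≤ (1/8:ℝ) := by
            rw [norm_neg, norm_pow]; nlinarith [norm_nonneg b]
          exact nadd (nadd (nadd (nadd c1 c2) c3) c4) c5
        have hcoe : ((1/8 : NNReal) : ℝ) = 1/8 := by norm_num
        rw [hcoe, mul_comm ‖a - b‖]
        nlinarith [norm_nonneg (a - b)]
    obtain ⟨x, hfix⟩ : ∃ x : S, Function.IsFixedPt T x :=
      ⟨_, hcontract.fixedPoint_isFixedPt⟩
    have hval : (x : ℚ_[2]) - (4/9) * (f x - y) = x := congrArg Subtype.val hfix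
    have hfy : f x = y := by
      have h49 : (4/9 : ℚ_[2]) ≠ 0 := by norm_num
      have h0 : (4/9 : ℚ_[2]) * (f x - y) = 0 := sub_eq_self.mp hval
      rcases mul_eq_zero.mp h0 with h | h
      · exact absurd h h49
      · exact sub_eq_zero.mp h
    exact ⟨x, x.2, hfy⟩
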